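/- Let ρ: SL(2,Z) → GL(d,C) be irreducible with d ≥ 2, and let υ be any multiplier system. Then the modular derivative D, acting componentwise on the graded space H(ρ,υ) of vector-valued modular forms for ρ and υ, is injective. -/

import Mathlib

set_option autoImplicit false

open Matrix MatrixGroups Complex

/-- The automorphy factor `J(γ,z) = c z + d` for `γ = [[a,b],[c,d]] ∈ SL(2,ℤ)`, `z ∈ ℍ`. -/
noncomputable def J (γ : SL(2,ℤ)) (z : UpperHalfPlane) : ℂ :=
  ((γ : Matrix (Fin 2) (Fin 2) ℤ) 1 0 : ℂ) * z + ((γ : Matrix (Fin 2) (Fin 2) ℤ) 1 1 : ℂ)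

/-- The Dedekind eta function `η(z) = q^{1/24} ∏_{n ≥ 1} (1 - q^n)`, `q = e^{2πiz}`,
regarded as a function of a complex variable (of interest for `Im z > 0`). -/
noncomputable def DedekindEta (z : ℂ) : ℂ :=
  Complex.exp (Real.pi * Complex.I * z / 12) *
    ∏' n : ℕ, (1 - Complex.exp (2 * Real.pi * Complex.I * ((n : ℂ) + 1) * z))

/-- The function `P(z) = (i/π) η'(z)/η(z)`. -/
noncomputable def Pfun (z : ℂ) : ℂ :=
  Complex.I / Real.pi * (deriv DedekindEta z / DedekindEta z)

/-- `υ : SL(2,ℤ) → ℂ` is a multiplier system of weight `k`: it takes values in the unit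
circle and `ν(γ,z) = υ(γ)(cz+d)^k` is a 1-cocycle (powers via the principal branch). -/
def IsMultiplierSystem (k : ℝ) (υ : SL(2,ℤ) → ℂ) : Prop :=
  (∀ γ, ‖υ γ‖ = 1) ∧
  ∀ γ σ : SL(2,ℤ), ∀ z : UpperHalfPlane,
    υ (γ * σ) * J (γ * σ) z ^ (k : ℂ) =
      υ γ * J γ (σ • z) ^ (k : ℂ) * (υ σ * J σ z ^ (k : ℂ))

/-- Holomorphy on the upper half-plane for a function of a complex variable. -/
def IsHolomorphicOnH (f : ℂ → ℂ) : Prop :=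
  ∀ z : ℂ, 0 < z.im → DifferentiableAt ℂ f z

/-- Moderate growth: `|f(x+iy)| ≤ y^N` for all `y > c`, for some positive `N`, `c`. -/
def IsModerateGrowth (f : ℂ → ℂ) : Prop :=
  ∃ (N : ℕ) (c : ℝ), 0 < N ∧ 0 < c ∧ ∀ z : ℂ, c < z.im → ‖f z‖ ≤ z.im ^ N

/-- A modular form of real weight `k` for the multiplier system `υ`: holomorphic on `ℍ`,
of moderate growth, and satisfying `f(γz) = υ(γ)(cz+d)^k f(z)`. -/
def IsModularFormMS (k : ℝ) (υ : SL(2,ℤ) → ℂ) (f : ℂ → ℂ) : Prop :=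
  IsHolomorphicOnH f ∧ IsModerateGrowth f ∧
    ∀ γ : SL(2,ℤ), ∀ z : UpperHalfPlane,
      f ((γ • z : UpperHalfPlane) : ℂ) = υ γ * J γ z ^ (k : ℂ) * f (z : ℂ)

/-- The modular derivative in weight `k`: `D_k f = (1/(2πi)) f' + k P f`. -/
noncomputable def Dk (k : ℝ) (f : ℂ → ℂ) : ℂ → ℂ :=
  fun z => 1 / (2 * Real.pi * Complex.I) * deriv f z + (k : ℂ) * Pfun z * f z

/-- A vector-valued modular form of weight `k` for the representation `ρ` and the
multiplier system `υ`: a vector of holomorphic, moderate-growth functions on `ℍ`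
satisfying `F(γz) = υ(γ)(cz+d)^k ρ(γ) F(z)`. -/
def IsVVModularForm {d : ℕ} (k : ℝ) (ρ : SL(2,ℤ) →* GL (Fin d) ℂ)
    (υ : SL(2,ℤ) → ℂ) (F : ℂ → Fin d → ℂ) : Prop :=
  (∀ i, IsHolomorphicOnH (fun z => F z i)) ∧
  (∀ i, IsModerateGrowth (fun z => F z i)) ∧
  ∀ γ : SL(2,ℤ), ∀ z : UpperHalfPlane,
    F ((γ • z : UpperHalfPlane) : ℂ) =
      fun i => υ γ * J γ z ^ (k : ℂ) *
        ((ρ γ).val.mulVec (F (z : ℂ))) i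

/-- Iterated modular derivative `D_k^n = D_{k+2(n-1)} ∘ ⋯ ∘ D_{k+2} ∘ D_k`. -/
noncomputable def DkIter (k : ℝ) : ℕ → (ℂ → ℂ) → ℂ → ℂ
  | 0 => fun f => f
  | n + 1 => fun f => Dk (k + 2 * n) (DkIter k n f)

/-- The modular Wronskian `W(F) = det (F, D_k F, …, D_k^{d-1} F)`. -/
noncomputable def ModularWronskian {d : ℕ} (k : ℝ) (F : ℂ → Fin d → ℂ) : ℂ → ℂ :=
  fun z => (Matrix.of fun i j : Fin d => DkIter k j (fun w => F w i) z).det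

/-- `ρ` is `T`-unitarizable: `ρ(T)` is conjugate to a unitary matrix. -/
def TUnitarizable {d : ℕ} (ρ : SL(2,ℤ) →* GL (Fin d) ℂ) : Prop :=
  ∃ u ∈ Matrix.unitaryGroup (Fin d) ℂ, ∃ P : GL (Fin d) ℂ,
    (ρ ModularGroup.T).val = P.val * u * (P⁻¹).val

/-- Irreducibility: the only invariant subspaces of `ℂ^d` are `0` and `ℂ^d`. -/
def RepIrreducible {d : ℕ} (ρ : SL(2,ℤ) →* GL (Fin d) ℂ) : Prop :=
  ∀ U : Submodule ℂ (Fin d → ℂ),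
    (∀ γ : SL(2,ℤ), ∀ v ∈ U, (ρ γ).val.mulVec v ∈ U) → U = ⊥ ∨ U = ⊤

/-- The modular derivative acting componentwise on vector-valued functions. -/
noncomputable def DkVec {d : ℕ} (k : ℝ) (F : ℂ → Fin d → ℂ) : ℂ → Fin d → ℂ :=
  fun z i => Dk k (fun w => F w i) z

lemma J_ne_zero (γ : SL(2,ℤ)) (z : UpperHalfPlane) : J γ z ≠ 0 := by
  intro h
  set c : ℤ := (γ : Matrix (Fin 2) (Fin 2) ℤ) 1 0 with hc
  set e : ℤ := (γ : Matrix (Fin 2) (Fin 2) ℤ) 1 1 with he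
  have h' : (c : ℂ) * (z : ℂ) + (e : ℂ) = 0 := h
  have him : ((c : ℂ) * (z : ℂ) + (e : ℂ)).im = (c : ℝ) * (z : ℂ).im := by
    simp [Complex.add_im, Complex.mul_im]
  have hczero : c = 0 := by
    have h2 : (c : ℝ) * (z : ℂ).im = 0 := by rw [← him, h']; rfl
    have hzim : 0 < (z : ℂ).im := z.2
    have : (c : ℝ) = 0 := by
      rcases mul_eq_zero.1 h2 with h3 | h3
      · exact h3
      · exact absurd h3 (ne_of_gt hzim)
    exact_mod_cast this
  have hezero : e = 0 := by
    have h3 : (e : ℂ) = 0 := by rw [hczero] at h'; simpa using h'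
    exact_mod_cast h3
  have hdet : (γ : Matrix (Fin 2) (Fin 2) ℤ).det = 1 := γ.2
  rw [Matrix.det_fin_two] at hdet
  rw [← hc, ← he, hczero, hezero] at hdet
  simp at hdet

/-- For an irreducible representation `ρ` of dimension `d ≥ 2` and any multiplier
system `υ`, the modular derivative `D` is injective on the graded space `H(ρ,υ)` of
vector-valued modular forms: a weight-`k` form killed by `D_k` vanishes. -/
theorem modular_derivative_injective {d : ℕ} (hd : 2 ≤ d)
    (ρ : SL(2,ℤ) →* GL (Fin d) ℂ) (hρ : RepIrreducible ρ)
    (k : ℝ) (υ : SL(2,ℤ) → ℂ) (hυ : IsMultiplierSystem k υ)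
    (F : ℂ → Fin d → ℂ) (hF : IsVVModularForm k ρ υ F)
    (h0 : ∀ z : ℂ, 0 < z.im → DkVec k F z = 0) :
    ∀ z : ℂ, 0 < z.im → F z = 0 := by
  set S : Set ℂ := {z : ℂ | 0 < z.im} with hSdef
  have hSo : IsOpen S := isOpen_lt continuous_const Complex.continuous_im
  have hSc : Convex ℝ S := convex_halfSpace_im_gt 0
  have hdiffAt : ∀ i, ∀ z ∈ S, DifferentiableAt ℂ (fun w => F w i) z :=
    fun i z hz => hF.1 i z hz
  have hdiff : ∀ i, DifferentiableOn ℂ (fun w => F w i) S :=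
    fun i z hz => (hdiffAt i z hz).differentiableWithinAt
  have hanal : ∀ i, AnalyticOnNhd ℂ (fun w => F w i) S :=
    fun i => (hdiff i).analyticOnNhd hSo
  have h2pi : (2 * (Real.pi : ℂ) * Complex.I) ≠ 0 := by
    simp [Real.pi_ne_zero, Complex.I_ne_zero]
  have hderiv : ∀ i, ∀ z ∈ S,
      deriv (fun w => F w i) z = -(2 * (Real.pi : ℂ) * Complex.I) * ((k : ℂ) * Pfun z * F z i) := by
    intro i z hz
    have h1 : Dk k (fun w => F w i) z = 0 := congrFun (h0 z hz) i
    rw [Dk] at h1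
    field_simp at h1
    linear_combination h1
  have hcross : ∀ i j, ∀ z ∈ S,
      deriv (fun w => F w i) z * F z j = deriv (fun w => F w j) z * F z i := by
    intro i j z hz
    rw [hderiv i z hz, hderiv j z hz]; ring
  by_cases hall : ∀ z ∈ S, ∀ i, F z i = 0
  · intro z hz; funext i; exact hall z hz i
  push_neg at hall
  obtain ⟨z0, hz0S, i0, hi0⟩ := hall
  exfalso
  -- find a ball around z0 inside S where F · i0 ≠ 0
  have hcont : ContinuousAt (fun w => F w i0) z0 := (hdiffAt i0 z0 hz0S).continuousAt
  have hne_nhds : {w : ℂ | F w i0 ≠ 0} ∈ nhds z0 :=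
    hcont.preimage_mem_nhds (isOpen_compl_singleton.mem_nhds hi0)
  have hS_nhds : S ∈ nhds z0 := hSo.mem_nhds hz0S
  obtain ⟨r, hr, hball⟩ := Metric.mem_nhds_iff.1 (Filter.inter_mem hS_nhds hne_nhds)
  set B : Set ℂ := Metric.ball z0 r with hBdef
  have hBS : B ⊆ S := fun w hw => (hball hw).1
  have hBne : ∀ w ∈ B, F w i0 ≠ 0 := fun w hw => (hball hw).2
  have hz0B : z0 ∈ B := Metric.mem_ball_self hr
  set lam : Fin d → ℂ := fun i => F z0 i / F z0 i0 with hlamdef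
  -- on the ball, components are proportional: F w i = lam i * F w i0
  have hprop_ball : ∀ i, ∀ w ∈ B, F w i = lam i * F w i0 := by
    intro i w hw
    set q : ℂ → ℂ := fun w => F w i / F w i0 with hqdef
    have hqdiff : DifferentiableOn ℂ q B :=
      ((hdiff i).mono hBS).div ((hdiff i0).mono hBS) hBne
    have hq' : ∀ x ∈ B, fderivWithin ℂ q B x = 0 := by
      intro x hx
      have hD : HasDerivAt q 0 x := by
        have h1 : HasDerivAt (fun w => F w i) (deriv (fun w => F w i) x) x :=
          (hdiffAt i x (hBS hx)).hasDerivAt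
        have h2 : HasDerivAt (fun w => F w i0) (deriv (fun w => F w i0) x) x :=
          (hdiffAt i0 x (hBS hx)).hasDerivAt
        have h3 := h1.div h2 (hBne x hx)
        have h4 : (deriv (fun w => F w i) x * F x i0 - F x i * deriv (fun w => F w i0) x)
            / F x i0 ^ 2 = 0 := by
          rw [div_eq_zero_iff]; left
          have := hcross i i0 x (hBS hx)
          linear_combination this
        rwa [h4] at h3
      rw [(hD.hasFDerivAt.hasFDerivWithinAt).fderivWithin
        (Metric.isOpen_ball.uniqueDiffOn x hx)]
      exact ContinuousLinearMap.ext fun y => by simp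
    have hconst := Convex.is_const_of_fderivWithin_eq_zero (convex_ball z0 r) hqdiff hq' hw hz0B
    have h5 : F w i / F w i0 = lam i := hconst
    rw [div_eq_iff (hBne w hw)] at h5
    exact h5
  -- extend proportionality to all of S by the identity theorem
  have hprop : ∀ i, ∀ w ∈ S, F w i = lam i * F w i0 := by
    intro i
    have hg : AnalyticOnNhd ℂ (fun w => F w i - lam i * F w i0) S :=
      (hanal i).sub ((analyticOnNhd_const).mul (hanal i0))
    have hev : (fun w => F w i - lam i * F w i0) =ᶠ[nhds z0] 0 := by
      filter_upwards [Metric.ball_mem_nhds z0 hr] with w hw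
      simp [hprop_ball i w hw]
    have heq := hg.eqOn_zero_of_preconnected_of_eventuallyEq_zero hSc.isPreconnected hz0S hev
    intro w hw
    have h6 := heq hw
    simpa [sub_eq_zero] using h6
  have hlam_i0 : lam i0 = 1 := by
    rw [hlamdef]; exact div_self hi0
  have hlam_ne : lam ≠ 0 := by
    intro h
    have : (1 : ℂ) = 0 := by rw [← hlam_i0, h]; rfl
    exact one_ne_zero this
  -- the span of the values of F on S
  set G : Set (Fin d → ℂ) := {v | ∃ z ∈ S, F z = v} with hGdef
  set U : Submodule ℂ (Fin d → ℂ) := Submodule.span ℂ G with hUdef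
  have hFsmul : ∀ z ∈ S, F z = F z i0 • lam := by
    intro z hz; funext i
    rw [Pi.smul_apply, smul_eq_mul, hprop i z hz]; ring
  have hUle : U ≤ Submodule.span ℂ {lam} := by
    rw [hUdef]
    apply Submodule.span_le.2
    rintro v ⟨z, hz, rfl⟩
    rw [hFsmul z hz]
    exact Submodule.smul_mem _ _ (Submodule.mem_span_singleton_self lam)
  have hinv : ∀ γ : SL(2,ℤ), ∀ v ∈ U, (ρ γ).val.mulVec v ∈ U := by
    intro γ v hv
    have hgen : ∀ v ∈ G, (ρ γ).val.mulVec v ∈ U := by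
      rintro v ⟨z, hz, rfl⟩
      set τ : UpperHalfPlane := ⟨z, hz⟩ with hτ
      have hmod := hF.2.2 γ τ
      set cγ : ℂ := υ γ * J γ τ ^ (k : ℂ) with hcγ
      have hcne : cγ ≠ 0 := by
        apply mul_ne_zero
        · intro h
          have := hυ.1 γ
          rw [h] at this
          simp at this
        · rw [Ne, Complex.cpow_eq_zero_iff]
          rintro ⟨h, -⟩
          exact J_ne_zero γ τ h
      have key : (ρ γ).val.mulVec (F z) = cγ⁻¹ • F ((γ • τ : UpperHalfPlane) : ℂ) := by
        funext i
        have h7 := congrFun hmod i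
        rw [Pi.smul_apply, smul_eq_mul, h7]
        field_simp
        rfl
      rw [key]
      refine Submodule.smul_mem _ _ (Submodule.subset_span ?_)
      exact ⟨((γ • τ : UpperHalfPlane) : ℂ), (γ • τ : UpperHalfPlane).2, rfl⟩
    have hmap : U.map ((ρ γ).val.mulVecLin) ≤ U := by
      rw [hUdef, Submodule.map_span]
      apply Submodule.span_le.2
      rintro v ⟨w, hwG, rfl⟩
      exact hgen w hwG
    exact hmap ⟨v, hv, rfl⟩
  rcases hρ U hinv with hbot | htop
  · have hmem : F z0 ∈ U := Submodule.subset_span ⟨z0, hz0S, rfl⟩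
    rw [hbot, Submodule.mem_bot] at hmem
    exact hi0 (congrFun hmem i0)
  · have h1 : (⊤ : Submodule ℂ (Fin d → ℂ)) ≤ Submodule.span ℂ {lam} := htop ▸ hUle
    have h2 : Submodule.span ℂ {lam} = ⊤ := top_le_iff.1 h1
    have h3 : Module.finrank ℂ (Fin d → ℂ) = 1 := by
      have h4 : Module.finrank ℂ ↥(Submodule.span ℂ {lam}) = 1 := finrank_span_singleton hlam_ne
      rw [h2, finrank_top ℂ (Fin d → ℂ)] at h4
      exact h4
    rw [Module.finrank_pi] at h3
    simp at h3
    omega
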